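/- Let r ≥ 1 and let Y(t) ∈ t·K[[t]] be the unique formal power series with zero constant term satisfying Y(t) = t(1 + Y(t)^{r+1}). Then the generating function F(t) of paths with steps (1,r) and (1,-1) from the origin that end on the x-axis and stay weakly above it satisfies F(t) = Y(t)/t. -/

import Mathlib

/-- The number of paths of length `n` with steps `(1,r)` and `(1,-1)` (recorded
by their `y`-displacements `r` and `-1`) that end on the `x`-axis and stay
weakly above it. -/
noncomputable def dyckCount (r n : ℕ) : ℕ :=
  Nat.card {l : List ℤ // l.length = n ∧ (∀ s ∈ l, s = (r : ℤ) ∨ s = -1) ∧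
    l.sum = 0 ∧ ∀ i : ℕ, 0 ≤ (l.take i).sum}

namespace DyckGF

open PowerSeries

/-- Paths (lists of `y`-displacements, each `r` or `-1`) from height `k`
down to `0` staying weakly above the axis. -/
def P (r k : ℕ) (l : List ℤ) : Prop :=
  (∀ s ∈ l, s = (r : ℤ) ∨ s = -1) ∧ l.sum = -(k : ℤ) ∧ ∀ i : ℕ, -(k : ℤ) ≤ (l.take i).sum

noncomputable def c (r k n : ℕ) : ℕ := Nat.card {l : List ℤ // l.length = n ∧ P r k l}

instance finP (r k n : ℕ) : Finite {l : List ℤ // l.length = n ∧ P r k l} := by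
  classical
  apply Finite.of_injective
    (f := fun l : {l : List ℤ // l.length = n ∧ P r k l} =>
      (fun i : Fin n => decide (l.1.getD i.1 0 = (r : ℤ))))
  intro x y h
  have hl₁ : x.1.length = n := x.2.1
  have hl₂ : y.1.length = n := y.2.1
  have hs₁ := x.2.2.1
  have hs₂ := y.2.2.1
  apply Subtype.ext
  apply List.ext_getElem (by omega)
  intro i hi₁ hi₂
  have hfi := congrFun h ⟨i, by omega⟩
  simp only [decide_eq_decide] at hfi
  rw [List.getD_eq_getElem x.1 0 hi₁, List.getD_eq_getElem y.1 0 hi₂] at hfi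
  have m₁ := hs₁ _ (List.getElem_mem hi₁)
  have m₂ := hs₂ _ (List.getElem_mem hi₂)
  rcases m₁ with e₁ | e₁ <;> rcases m₂ with e₂ | e₂ <;> rw [e₁, e₂] at hfi ⊢ <;> omega


lemma c_zero_zero (r : ℕ) : c r 0 0 = 1 := by
  haveI : Unique {l : List ℤ // l.length = 0 ∧ P r 0 l} := by
    refine ⟨⟨⟨[], by simp [P]⟩⟩, ?_⟩
    rintro ⟨l, hl, -⟩
    simp only [Subtype.mk.injEq]
    exact List.length_eq_zero_iff.mp hl
  exact Nat.card_unique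

lemma c_succ_zero (r k : ℕ) : c r (k+1) 0 = 0 := by
  haveI : IsEmpty {l : List ℤ // l.length = 0 ∧ P r (k+1) l} := by
    refine ⟨?_⟩
    rintro ⟨l, hl, -, hsum, -⟩
    rw [List.length_eq_zero_iff.mp hl] at hsum
    simp only [List.sum_nil] at hsum
    have : ((k:ℤ)+1) = 0 := by push_cast at hsum; omega
    omega
  rw [c]
  exact Nat.card_of_isEmpty

lemma P_cons {r : ℕ} {l : List ℤ} (h : P r r l) : P r 0 ((r : ℤ) :: l) := by
  obtain ⟨hs, hsum, hpre⟩ := h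
  refine ⟨?_, ?_, ?_⟩
  · intro s hs'
    rcases List.mem_cons.mp hs' with h | h
    · exact Or.inl h
    · exact hs s h
  · simp only [List.sum_cons, hsum]
    push_cast; ring
  · intro i
    rcases i with _ | i
    · simp
    · have h := hpre i
      simp only [List.take_succ_cons, List.sum_cons, Nat.cast_zero, neg_zero]
      omega

lemma P_of_cons {r : ℕ} {a : ℤ} {l : List ℤ} (h : P r 0 (a :: l)) :
    a = (r : ℤ) ∧ P r r l := by
  obtain ⟨hs, hsum, hpre⟩ := h
  simp only [Nat.cast_zero, neg_zero] at hsum hpre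
  have ha : a = (r : ℤ) := by
    have h1 := hpre 1
    simp only [List.take_succ_cons, List.take_zero, List.sum_cons, List.sum_nil,
      add_zero] at h1
    rcases hs a (by simp) with h | h
    · exact h
    · omega
  refine ⟨ha, fun s hs' => hs s (by simp [hs']), ?_, ?_⟩
  · simp only [List.sum_cons, ha] at hsum
    omega
  · intro i
    have h := hpre (i+1)
    simp only [List.take_succ_cons, List.sum_cons, ha] at h
    omega

lemma c_first_step (r n : ℕ) : c r 0 (n+1) = c r r n := by
  refine (Nat.card_eq_of_bijective
    (fun x : {l : List ℤ // l.length = n ∧ P r r l} =>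
      (⟨(r : ℤ) :: x.1, by simp [x.2.1], P_cons x.2.2⟩ :
        {l : List ℤ // l.length = n+1 ∧ P r 0 l})) ⟨?_, ?_⟩).symm
  · intro x y h
    simp only [Subtype.mk.injEq, List.cons.injEq] at h
    exact Subtype.ext h.2
  · rintro ⟨l, hl, hP⟩
    obtain ⟨a, t, rfl⟩ : ∃ a t, l = a :: t := by
      cases l with
      | nil => simp at hl
      | cons a t => exact ⟨a, t, rfl⟩
    obtain ⟨ha, ht⟩ := P_of_cons hP
    subst ha
    exact ⟨⟨t, by simpa using hl, ht⟩, rfl⟩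
lemma P_append {r k : ℕ} {D t : List ℤ} (hD : P r 0 D) (ht : P r k t) :
    P r (k+1) (D ++ (-1 :: t)) := by
  obtain ⟨hDs, hDsum, hDpre⟩ := hD
  obtain ⟨hts, htsum, htpre⟩ := ht
  simp only [Nat.cast_zero, neg_zero] at hDsum hDpre
  refine ⟨?_, ?_, ?_⟩
  · intro s hs
    rcases List.mem_append.mp hs with h | h
    · exact hDs s h
    · rcases List.mem_cons.mp h with h | h
      · right; exact h
      · exact hts s h
  · simp only [List.sum_append, List.sum_cons, hDsum, htsum]
    push_cast; ring
  · intro i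
    rw [List.take_append, List.sum_append]
    have h1 := hDpre i
    have h2 : -((k : ℤ) + 1) ≤ (((-1 : ℤ) :: t).take (i - D.length)).sum := by
      cases hm : i - D.length with
      | zero => simp
      | succ m =>
        rw [List.take_succ_cons, List.sum_cons]
        have := htpre m
        omega
    push_cast
    omega

lemma exists_split {r k : ℕ} {l : List ℤ} (h : P r (k+1) l) :
    ∃ D t, l = D ++ (-1 :: t) ∧ P r 0 D ∧ P r k t := by
  classical
  obtain ⟨hs, hsum, hpre⟩ := h
  have hex : ∃ j, (l.take j).sum < 0 := by
    refine ⟨l.length, ?_⟩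
    rw [List.take_length, hsum]
    push_cast; omega
  have hjlt : (l.take (Nat.find hex)).sum < 0 := Nat.find_spec hex
  have hmin : ∀ i < Nat.find hex, 0 ≤ (l.take i).sum :=
    fun i hi => not_lt.mp (Nat.find_min hex hi)
  have hjle : Nat.find hex ≤ l.length := by
    apply Nat.find_le
    rw [List.take_length, hsum]; push_cast; omega
  have hjpos : Nat.find hex ≠ 0 := by
    intro h0; rw [h0] at hjlt; simp at hjlt
  obtain ⟨j', hj'⟩ : ∃ j', Nat.find hex = j' + 1 := ⟨Nat.find hex - 1, by omega⟩
  have hj'lt : j' < l.length := by omega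
  have hsum' : (l.take (j'+1)).sum = (l.take j').sum + l[j'] :=
    List.sum_take_succ l j' hj'lt
  have hprev : 0 ≤ (l.take j').sum := hmin j' (by omega)
  have hmem := hs _ (List.getElem_mem hj'lt)
  have hstep : l[j'] = -1 ∧ (l.take j').sum = 0 := by
    rw [hj'] at hjlt
    rcases hmem with h | h <;> rw [h] at hsum' <;> rw [hsum'] at hjlt <;>
      constructor <;> first | omega | (rw [h]; omega) | rfl
  refine ⟨l.take j', l.drop (j'+1), ?_, ⟨?_, ?_, ?_⟩, ?_, ?_, ?_⟩
  · conv_lhs => rw [← List.take_append_drop j' l]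
    rw [List.drop_eq_getElem_cons hj'lt, hstep.1]
  · exact fun s hs' => hs s (List.take_subset _ _ hs')
  · simp [hstep.2]
  · intro i
    rw [List.take_take]
    simp only [Nat.cast_zero, neg_zero]
    exact hmin _ (by omega)
  · exact fun s hs' => hs s (List.drop_subset _ _ hs')
  · have hls : (l.take (j'+1)).sum + (l.drop (j'+1)).sum = l.sum := by
      conv_rhs => rw [← List.take_append_drop (j'+1) l]
      simp [List.sum_append]
    rw [hsum', hstep.1, hstep.2, hsum] at hls
    push_cast at hls ⊢
    omega
  · intro i
    have hta : l.take (j'+1+i) = l.take (j'+1) ++ (l.drop (j'+1)).take i := List.take_add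
    have h := hpre (j'+1+i)
    rw [hta, List.sum_append, hsum', hstep.1, hstep.2] at h
    push_cast at h ⊢
    omega

lemma split_len_le {r : ℕ} {D D' t t' : List ℤ} (hDsum : D.sum = 0) (hD' : P r 0 D')
    (h : D ++ (-1 :: t) = D' ++ (-1 :: t')) : D'.length ≤ D.length := by
  by_contra hlt
  push_neg at hlt
  have h1 : ((D ++ (-1 :: t)).take (D.length + 1)).sum = -1 := by
    rw [List.take_append]
    have h0 : D.length + 1 - D.length = 1 := by omega
    rw [h0, List.take_of_length_le (by omega)]
    simp [List.sum_append, hDsum]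
  have h2 : ((D' ++ (-1 :: t')).take (D.length + 1)).sum = (D'.take (D.length + 1)).sum := by
    rw [List.take_append]
    have h0 : D.length + 1 - D'.length = 0 := by omega
    rw [h0]
    simp
  rw [h, h2] at h1
  have h3 := hD'.2.2 (D.length + 1)
  simp only [Nat.cast_zero, neg_zero] at h3
  omega

lemma split_unique {r : ℕ} {D D' t t' : List ℤ} (hD : P r 0 D) (hD' : P r 0 D')
    (h : D ++ (-1 :: t) = D' ++ (-1 :: t')) : D = D' ∧ t = t' := by
  have hDsum : D.sum = 0 := by have := hD.2.1; simpa using this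
  have hD'sum : D'.sum = 0 := by have := hD'.2.1; simpa using this
  have hle := split_len_le hDsum hD' h
  have hge := split_len_le hD'sum hD h.symm
  have h2 := List.append_inj h (by omega)
  exact ⟨h2.1, by simpa using h2.2⟩
noncomputable def comb (r k m : ℕ) :
    (Σ p : (Finset.HasAntidiagonal.antidiagonal m : Finset (ℕ × ℕ)),
      {l : List ℤ // l.length = p.1.1 ∧ P r 0 l} × {l : List ℤ // l.length = p.1.2 ∧ P r k l}) →
    {l : List ℤ // l.length = m + 1 ∧ P r (k+1) l} :=
  fun x => ⟨x.2.1.1 ++ (-1 :: x.2.2.1), by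
    have hp := Finset.HasAntidiagonal.mem_antidiagonal.mp x.1.2
    have h1 := x.2.1.2.1
    have h2 := x.2.2.2.1
    simp only [List.length_append, List.length_cons]
    omega,
    P_append x.2.1.2.2 x.2.2.2.2⟩

lemma comb_bijective (r k m : ℕ) : Function.Bijective (comb r k m) := by
  constructor
  · rintro ⟨⟨p, hp⟩, ⟨D, hD⟩, ⟨t, ht⟩⟩ ⟨⟨q, hq⟩, ⟨E, hE⟩, ⟨u, hu⟩⟩ h
    simp only [comb, Subtype.mk.injEq] at h
    obtain ⟨hDE, htu⟩ := split_unique hD.2 hE.2 h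
    subst hDE; subst htu
    have h1 := hD.1; have h2 := hE.1; have h3 := ht.1; have h4 := hu.1
    simp only at h1 h2 h3 h4
    have hpq : p = q := Prod.ext (by omega) (by omega)
    subst hpq
    rfl
  · rintro ⟨l, hl, hP⟩
    obtain ⟨D, t, rfl, hD, ht⟩ := exists_split hP
    have hlen : D.length + t.length = m := by
      simp only [List.length_append, List.length_cons] at hl
      omega
    exact ⟨⟨⟨(D.length, t.length), Finset.HasAntidiagonal.mem_antidiagonal.mpr hlen⟩,
      ⟨D, rfl, hD⟩, ⟨t, rfl, ht⟩⟩, rfl⟩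

lemma c_conv (r k m : ℕ) :
    c r (k+1) (m+1) = ∑ p ∈ Finset.HasAntidiagonal.antidiagonal m, c r 0 p.1 * c r k p.2 := by
  classical
  have h1 := Nat.card_eq_of_bijective _ (comb_bijective r k m)
  rw [c, ← h1]
  haveI : ∀ p : (Finset.HasAntidiagonal.antidiagonal m : Finset (ℕ × ℕ)),
      Fintype ({l : List ℤ // l.length = p.1.1 ∧ P r 0 l} ×
        {l : List ℤ // l.length = p.1.2 ∧ P r k l}) := fun p => Fintype.ofFinite _
  rw [Nat.card_eq_fintype_card, Fintype.card_sigma]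
  rw [← Finset.sum_coe_sort (Finset.HasAntidiagonal.antidiagonal m) (fun p => c r 0 p.1 * c r k p.2)]
  refine Finset.sum_congr rfl fun p _ => ?_
  rw [← Nat.card_eq_fintype_card, Nat.card_prod]
  rfl
section PS
variable {K : Type*} [Field K] (r : ℕ)

noncomputable def G (k : ℕ) : PowerSeries K := PowerSeries.mk fun n => (c r k n : K)

lemma G_succ (k : ℕ) : (G r (k+1) : PowerSeries K) = X * (G r 0 * G r k) := by
  ext n
  cases n with
  | zero =>
    simp [G, coeff_zero_eq_constantCoeff, map_mul, constantCoeff_X, c_succ_zero]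
  | succ n =>
    rw [coeff_succ_X_mul, coeff_mul]
    simp only [G, coeff_mk]
    rw [c_conv]
    push_cast
    rfl

lemma G_zero_eq : (G r 0 : PowerSeries K) = 1 + X * G r r := by
  ext n
  cases n with
  | zero =>
    simp [G, coeff_zero_eq_constantCoeff, map_add, map_mul, constantCoeff_X,
      constantCoeff_one, c_zero_zero]
  | succ n =>
    rw [map_add, coeff_succ_X_mul]
    simp [G, coeff_mk, coeff_one, c_first_step]

lemma G_formula (k : ℕ) : (G r k : PowerSeries K) = (X * G r 0)^k * G r 0 := by
  induction k with
  | zero => simp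
  | succ k ih => rw [G_succ, ih]; ring

lemma pow_coeff_congr {f g : PowerSeries K} {n : ℕ}
    (h : ∀ j ≤ n, (coeff j) f = (coeff j) g) (k : ℕ) :
    ∀ i ≤ n, (coeff i) (f^k) = (coeff i) (g^k) := by
  induction k with
  | zero => intro i _; rfl
  | succ k ih =>
    intro i hi
    rw [pow_succ, pow_succ, coeff_mul, coeff_mul]
    refine Finset.sum_congr rfl fun p hp => ?_
    rw [Finset.HasAntidiagonal.mem_antidiagonal] at hp
    rw [ih p.1 (by omega), h p.2 (by omega)]

lemma uniq {Z₁ Z₂ : PowerSeries K} (h1 : Z₁ = X * (1 + Z₁^(r+1)))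
    (h2 : Z₂ = X * (1 + Z₂^(r+1))) : Z₁ = Z₂ := by
  ext n
  induction n using Nat.strong_induction_on with
  | _ n ih =>
    cases n with
    | zero =>
      conv_lhs => rw [h1]
      conv_rhs => rw [h2]
      simp [coeff_zero_eq_constantCoeff, map_mul, constantCoeff_X]
    | succ n =>
      conv_lhs => rw [h1]
      conv_rhs => rw [h2]
      rw [coeff_succ_X_mul, coeff_succ_X_mul, map_add, map_add]
      congr 1
      exact pow_coeff_congr (fun j hj => ih j (by omega)) (r+1) n le_rfl

lemma XG_eq : (X * G r 0 : PowerSeries K) = X * (1 + (X * G r 0)^(r+1)) := by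
  conv_lhs => rw [G_zero_eq, G_formula r r]
  ring
end PS

lemma dyck_eq (r n : ℕ) : dyckCount r n = DyckGF.c r 0 n := by
  apply Nat.card_congr
  apply Equiv.subtypeEquivRight
  intro l
  simp [DyckGF.P]

end DyckGF

/-- **Example 3.4 (computation of `Γ(H₀)`).**
Let `K` be a field of characteristic `0`, let `r ≥ 1`, and let
`Y(t) ∈ t·K[[t]]` be the unique power series with zero constant term
satisfying `Y(t) = t(1 + Y(t)^{r+1})`.  Then the generating function `F(t)` of
paths with steps `(1,r)` and `(1,-1)` that end on the `x`-axis and stay weakly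
above it satisfies `F(t) = Y(t)/t`, i.e. `t·F(t) = Y(t)`. -/
theorem dyck_gf_eq_Y_div_t {K : Type*} [Field K] [CharZero K]
    (r : ℕ) (hr : 1 ≤ r) (Y : PowerSeries K)
    (hY0 : PowerSeries.constantCoeff Y = 0)
    (hY : Y = PowerSeries.X * (1 + Y ^ (r + 1))) :
    PowerSeries.X * (PowerSeries.mk fun n => (dyckCount r n : K)) = Y := by
  have hd : (PowerSeries.mk fun n => (dyckCount r n : K)) = DyckGF.G r 0 := by
    ext n
    simp only [DyckGF.G, PowerSeries.coeff_mk]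
    rw [DyckGF.dyck_eq]
  rw [hd]
  exact DyckGF.uniq r (DyckGF.XG_eq r) hY
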